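/- Let V = K + M be a one-dimensional valuation domain with maximal ideal M satisfying M^2 = M, where K is a field contained in V, and let k be a proper subfield of K. Set D = k + M. Then D is Archimedean, but there exist a, b ∈ D with (b) ⊄ (a) such that ⋂_{n≥1}((a):(b))^n = M ≠ (0). In particular, with m ∈ M nonzero and α ∈ K \ k, taking b = m and a = αm, one has (a):(b) = M. -/

import Mathlib

variable (V : Type*) [CommRing V] [IsDomain V]

/-- The subring `k + M` of `V`, for a subring `k` and an ideal `M` of `V`. -/
def plusSubring (k : Subring V) (M : Ideal V) : Subring V where
  carrier := {v : V | ∃ c ∈ k, ∃ m ∈ M, v = c + m}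
  zero_mem' := ⟨0, zero_mem k, 0, M.zero_mem, by ring⟩
  one_mem' := ⟨1, one_mem k, 0, M.zero_mem, by ring⟩
  add_mem' := by
    rintro _ _ ⟨c, hc, m, hm, rfl⟩ ⟨c', hc', m', hm', rfl⟩
    exact ⟨c + c', add_mem hc hc', m + m', M.add_mem hm hm', by ring⟩
  neg_mem' := by
    rintro _ ⟨c, hc, m, hm, rfl⟩
    exact ⟨-c, neg_mem hc, -m, M.neg_mem hm, by ring⟩
  mul_mem' := by
    rintro _ _ ⟨c, hc, m, hm, rfl⟩ ⟨c', hc', m', hm', rfl⟩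
    exact ⟨c * c', mul_mem hc hc',
      c * m' + m * c' + m * m',
      M.add_mem (M.add_mem (M.mul_mem_left _ hm') (M.mul_mem_right _ hm)) (M.mul_mem_left _ hm'),
      by ring⟩

/-- The ideal `M` viewed as an ideal of the subring `k + M`. -/
def resIdeal (k : Subring V) (M : Ideal V) : Ideal (plusSubring V k M) :=
  M.comap (plusSubring V k M).subtype

section helpers
set_option linter.unusedSectionVars false
variable {W : Type*} [CommRing W] [IsDomain W]



lemma one_add_mem_unit {M : Ideal W} (hMmax : M.IsMaximal)
    (hMuniq : ∀ I : Ideal W, I ≠ ⊤ → I ≤ M) {m : W} (hm : m ∈ M) :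
    ∃ m' ∈ M, (1 + m) * (1 + m') = 1 := by
  have h1 : Ideal.span {1 + m} = ⊤ := by
    by_contra h
    have h2 : (1 + m) ∈ M := hMuniq _ h (Ideal.mem_span_singleton_self (1 + m))
    have : (1 : W) ∈ M := by
      have := M.sub_mem h2 hm
      simpa using this
    exact hMmax.ne_top ((Ideal.eq_top_iff_one M).mpr this)
  obtain ⟨u, hu⟩ := Ideal.span_singleton_eq_top.mp h1
  set v : W := ((u⁻¹ : Wˣ) : W) with hv
  have huv : (1 + m) * v = 1 := by rw [hv, ← hu]; exact u.mul_inv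
  have hmem : v - 1 ∈ M := by
    have h : v - 1 = -(m * v) := by linear_combination huv
    rw [h]
    exact M.neg_mem (M.mul_mem_right v hm)
  have heq : (1 + m) * (1 + (v - 1)) = 1 := by
    have h : (1 + m) * (1 + (v - 1)) = (1 + m) * v := by ring
    rw [h]; exact huv
  exact ⟨v - 1, hmem, heq⟩

lemma inter_pow_eq_bot [ValuationRing W] {M : Ideal W} (hMmax : M.IsMaximal)
    (hdim : ∀ P : Ideal W, P.IsPrime → P ≠ ⊥ → P = M)
    {x : W} (hxM : x ∈ M) (hx0 : x ≠ 0) {y : W} (hy : ∀ n : ℕ, x ^ n ∣ y) : y = 0 := by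
  have hxu : ¬ IsUnit x := fun h => hMmax.ne_top (M.eq_top_of_isUnit_mem hxM h)
  set P : Ideal W :=
    { carrier := {z | ∀ n : ℕ, x ^ n ∣ z}
      zero_mem' := fun n => dvd_zero _
      add_mem' := fun ha hb n => dvd_add (ha n) (hb n)
      smul_mem' := fun c a ha n => Dvd.dvd.mul_left (ha n) c } with hP
  have hyP : y ∈ P := hy
  by_contra hy0
  have hPne : P ≠ ⊥ := fun h => hy0 ((Submodule.mem_bot W).mp (h ▸ hyP))
  have hPprime : P.IsPrime := by
    constructor
    · intro h
      rw [Ideal.eq_top_iff_one] at h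
      have : x ^ 1 ∣ 1 := h 1
      rw [pow_one] at this
      exact hxu (isUnit_of_dvd_one this)
    · intro a b hab
      by_contra hcon
      push_neg at hcon
      obtain ⟨ha, hb⟩ := hcon
      obtain ⟨n, hn⟩ : ∃ n : ℕ, ¬ x ^ n ∣ a := by
        by_contra h; push_neg at h; exact ha h
      obtain ⟨p, hp⟩ : ∃ p : ℕ, ¬ x ^ p ∣ b := by
        by_contra h; push_neg at h; exact hb h
      have hax : a ∣ x ^ n := (ValuationRing.dvd_total (x ^ n) a).resolve_left hn
      have hbx : b ∣ x ^ p := (ValuationRing.dvd_total (x ^ p) b).resolve_left hp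
      have h1 : a * b ∣ x ^ (n + p) := by rw [pow_add]; exact mul_dvd_mul hax hbx
      have h2 : x ^ (n + p + 1) ∣ x ^ (n + p) := dvd_trans (hab (n + p + 1)) h1
      obtain ⟨t, ht⟩ := h2
      have ht' : x ^ (n + p) * 1 = x ^ (n + p) * (x * t) := by
        rw [mul_one]
        calc x ^ (n + p) = x ^ (n + p + 1) * t := ht
          _ = x ^ (n + p) * (x * t) := by rw [pow_succ]; ring
      have h3 := mul_left_cancel₀ (pow_ne_zero _ hx0) ht'
      exact hxu (IsUnit.of_mul_eq_one (a := x) t h3.symm)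
  have hPM : P = M := hdim P hPprime hPne
  have hxP : x ∈ P := hPM ▸ hxM
  obtain ⟨t, ht⟩ := hxP 2
  have ht' : x * 1 = x * (x * t) := by
    rw [mul_one]
    calc x = x ^ 2 * t := ht
      _ = x * (x * t) := by ring
  have h3 := mul_left_cancel₀ hx0 ht'
  exact hxu (IsUnit.of_mul_eq_one (a := x) t h3.symm)

end helpers

/-- Let `V = K + M` be a one-dimensional valuation domain with idempotent maximal ideal
`M`, `K` a field inside `V`, and `k` a proper subfield of `K`.  Then `D = k + M` is
Archimedean, but there are `a, b ∈ D` with `(b) ⊄ (a)` and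
`⋂_{n ≥ 1} ((a):(b))^n = M ≠ (0)`.  In particular, for `0 ≠ m ∈ M` and `α ∈ K \ k`,
taking `b = m` and `a = α * m`, one has `(a):(b) = M`. -/
theorem stmt_17 [ValuationRing V]
    (M : Ideal V) (hMmax : M.IsMaximal) (hMuniq : ∀ I : Ideal V, I ≠ ⊤ → I ≤ M)
    (hMbot : M ≠ ⊥) (hdim : ∀ P : Ideal V, P.IsPrime → P ≠ ⊥ → P = M)
    (hM2 : M * M = M)
    (K k : Subring V)
    (hK : ∀ x ∈ K, x ≠ (0 : V) → ∃ y ∈ K, x * y = 1)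
    (hk : ∀ x ∈ k, x ≠ (0 : V) → ∃ y ∈ k, x * y = 1)
    (hkK : k ≤ K) (hkne : k ≠ K)
    (hdecomp : ∀ v : V, ∃ c ∈ K, ∃ m ∈ M, v = c + m) :
    (∀ x : plusSubring V k M, ¬ IsUnit x →
        (⨅ (n : ℕ) (_ : 1 ≤ n), Ideal.span {x ^ n}) = ⊥) ∧
      (∃ a b : plusSubring V k M, ¬ Ideal.span {b} ≤ Ideal.span {a} ∧
        (⨅ (n : ℕ) (_ : 1 ≤ n), ((Ideal.span {a}).colon (Ideal.span {b})) ^ n) =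
          resIdeal V k M ∧
        resIdeal V k M ≠ ⊥) ∧
      (∀ m : V, m ∈ M → m ≠ 0 → ∀ α ∈ K, α ∉ k →
        ∀ a b : plusSubring V k M, (a : V) = α * m → (b : V) = m →
          (Ideal.span {a}).colon (Ideal.span {b}) = resIdeal V k M) := by
  classical
  -- K ∩ M = 0
  have hKM : ∀ x ∈ K, x ∈ M → x = 0 := by
    intro x hxK hxM
    by_contra hx
    obtain ⟨y, -, hxy⟩ := hK x hxK hx
    exact hMmax.ne_top ((Ideal.eq_top_iff_one M).mpr (hxy ▸ M.mul_mem_right y hxM))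
  -- M ⊆ D
  have hMD : ∀ v ∈ M, v ∈ plusSubring V k M := fun v hv =>
    ⟨0, zero_mem k, v, hv, by ring⟩
  -- membership in resIdeal
  have hres : ∀ x : plusSubring V k M, x ∈ resIdeal V k M ↔ (x : V) ∈ M := by
    intro x; exact Iff.rfl
  -- key: α ∉ k and α * c ∈ k with c ∈ k forces c = 0
  have hkey : ∀ α ∈ K, α ∉ k → ∀ c ∈ k, α * c ∈ k → c = 0 := by
    intro α hαK hαk c hck hαc
    by_contra hc
    obtain ⟨c', hc'k, hcc'⟩ := hk c hck hc
    refine hαk ?_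
    have hα : α = (α * c) * c' := by rw [mul_assoc, hcc', mul_one]
    rw [hα]
    exact mul_mem hαc hc'k
  -- Part 3: colon computation
  have hcolon : ∀ m : V, m ∈ M → m ≠ 0 → ∀ α ∈ K, α ∉ k →
      ∀ a b : plusSubring V k M, (a : V) = α * m → (b : V) = m →
        (Ideal.span {a}).colon (Ideal.span {b}) = resIdeal V k M := by
    intro m hmM hm0 α hαK hαk a b ha hb
    have hα0 : α ≠ 0 := fun h => hαk (h ▸ zero_mem k)
    obtain ⟨β, hβK, hαβ⟩ := hK α hαK hα0
    ext x
    rw [Ideal.mem_colon_span_singleton, Ideal.mem_span_singleton, hres]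
    constructor
    · rintro ⟨d, hd⟩
      rw [Subtype.ext_iff] at hd
      push_cast at hd
      rw [ha, hb] at hd
      -- hd : (x:V) * m = α * m * d
      have hxd : (x : V) = α * (d : V) := by
        refine mul_right_cancel₀ hm0 ?_
        rw [hd]; ring
      obtain ⟨c, hck, μ, hμM, hdc⟩ := d.2
      obtain ⟨c', hc'k, μ', hμ'M, hxc⟩ := x.2
      -- α * c - c' ∈ K ∩ M
      have h1 : α * c - c' ∈ M := by
        have : α * c - c' = μ' - α * μ := by
          have := hxd
          rw [hdc, hxc] at this
          linear_combination -this
        rw [this]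
        exact M.sub_mem hμ'M (M.mul_mem_left α hμM)
      have h2 : α * c - c' ∈ K := sub_mem (mul_mem hαK (hkK hck)) (hkK hc'k)
      have h3 : α * c = c' := sub_eq_zero.mp (hKM _ h2 h1)
      have hc0 : c = 0 := hkey α hαK hαk c hck (h3 ▸ hc'k)
      rw [hxd, hdc, hc0]
      simpa using M.mul_mem_left α hμM
    · intro hxM
      refine ⟨⟨β * (x : V), hMD _ (M.mul_mem_left β hxM)⟩, ?_⟩
      apply Subtype.ext
      push_cast
      rw [ha, hb]
      calc (x : V) * m = (α * β) * ((x : V) * m) := by rw [hαβ, one_mul]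
        _ = α * m * (β * (x : V)) := by ring
  refine ⟨?_, ?_, hcolon⟩
  · -- Archimedean
    intro x hxu
    have hxM : (x : V) ∈ M := by
      by_contra hxM
      apply hxu
      obtain ⟨c, hck, μ, hμM, hxc⟩ := x.2
      have hc0 : c ≠ 0 := by
        intro h
        apply hxM
        rw [hxc, h, zero_add]
        exact hμM
      obtain ⟨c', hc'k, hcc'⟩ := hk c hck hc0
      obtain ⟨m', hm'M, hinv⟩ := one_add_mem_unit hMmax hMuniq (M.mul_mem_left c' hμM)
      refine IsUnit.of_mul_eq_one (a := x)
        ⟨c' + c' * m', c', hc'k, c' * m', M.mul_mem_left _ hm'M, rfl⟩ ?_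
      apply Subtype.ext
      push_cast
      rw [hxc]
      calc (c + μ) * (c' + c' * m')
          = (c * c' + c' * μ) * (1 + m') := by ring
        _ = (1 + c' * μ) * (1 + m') := by rw [hcc']
        _ = 1 := hinv
    rw [eq_bot_iff]
    intro y hy
    have hy' : ∀ n : ℕ, (x : V) ^ n ∣ (y : V) := by
      intro n
      rcases Nat.eq_zero_or_pos n with h | h
      · simp [h]
      · have hy1 : y ∈ Ideal.span {x ^ n} :=
          (Submodule.mem_iInf _).mp ((Submodule.mem_iInf _).mp hy n) h
        obtain ⟨d, hd⟩ := Ideal.mem_span_singleton.mp hy1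
        rw [Subtype.ext_iff] at hd
        push_cast at hd
        exact ⟨d, hd⟩
    by_cases hx0 : (x : V) = 0
    · have := hy' 1
      rw [pow_one, hx0, zero_dvd_iff] at this
      exact (Submodule.mem_bot _).mpr (Subtype.ext this)
    · exact (Submodule.mem_bot _).mpr
        (Subtype.ext (inter_pow_eq_bot hMmax hdim hxM hx0 hy'))
  · -- existence
    obtain ⟨α, hαK, hαk⟩ := SetLike.exists_of_lt (lt_of_le_of_ne hkK hkne)
    obtain ⟨m, hmM, hm0⟩ := Submodule.ne_bot_iff M |>.mp hMbot
    refine ⟨⟨α * m, hMD _ (M.mul_mem_left α hmM)⟩, ⟨m, hMD _ hmM⟩, ?_, ?_, ?_⟩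
    · intro hle
      have hb := hle (Ideal.mem_span_singleton_self _)
      obtain ⟨d, hd⟩ := Ideal.mem_span_singleton.mp hb
      rw [Subtype.ext_iff] at hd
      push_cast at hd
      -- hd : m = α * m * d
      have h1 : (1 : V) = α * (d : V) := by
        refine mul_right_cancel₀ hm0 ?_
        linear_combination hd
      obtain ⟨c, hck, μ, hμM, hdc⟩ := d.2
      have h2 : 1 - α * c ∈ M := by
        have : (1 : V) - α * c = α * μ := by rw [hdc] at h1; linear_combination h1
        rw [this]; exact M.mul_mem_left α hμM
      have h3 : (1 : V) - α * c ∈ K := sub_mem (one_mem K) (mul_mem hαK (hkK hck))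
      have h4 : α * c = 1 := (sub_eq_zero.mp (hKM _ h3 h2)).symm
      have hc0 : c = 0 := hkey α hαK hαk c hck (h4 ▸ one_mem k)
      rw [hc0, mul_zero] at h4
      exact zero_ne_one h4
    · rw [hcolon m hmM hm0 α hαK hαk _ _ rfl rfl]
      -- J * J = J
      have hJJ : resIdeal V k M * resIdeal V k M = resIdeal V k M := by
        apply le_antisymm Ideal.mul_le_left
        intro z hz
        have hz' : (z : V) ∈ M * M := by rw [hM2]; exact (hres z).mp hz
        have key : ∃ hv : (z : V) ∈ plusSubring V k M,
            (⟨(z : V), hv⟩ : plusSubring V k M) ∈ resIdeal V k M * resIdeal V k M := by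
          refine Submodule.mul_induction_on hz' ?_ ?_
          · intro p hp q hq
            refine ⟨mul_mem (hMD p hp) (hMD q hq), ?_⟩
            have : (⟨p * q, mul_mem (hMD p hp) (hMD q hq)⟩ : plusSubring V k M) =
                ⟨p, hMD p hp⟩ * ⟨q, hMD q hq⟩ := Subtype.ext rfl
            rw [this]
            exact Ideal.mul_mem_mul ((hres _).mpr hp) ((hres _).mpr hq)
          · rintro u w ⟨hu, h1⟩ ⟨hw, h2⟩
            refine ⟨add_mem hu hw, ?_⟩
            have : (⟨u + w, add_mem hu hw⟩ : plusSubring V k M) =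
                ⟨u, hu⟩ + ⟨w, hw⟩ := Subtype.ext rfl
            rw [this]
            exact add_mem h1 h2
        obtain ⟨hv, hmem⟩ := key
        have : z = ⟨(z : V), hv⟩ := Subtype.ext rfl
        rw [this]
        exact hmem
      have hJn : ∀ n : ℕ, 1 ≤ n → (resIdeal V k M) ^ n = resIdeal V k M := by
        intro n hn
        induction n with
        | zero => omega
        | succ n ih =>
          rcases Nat.eq_zero_or_pos n with rfl | h
          · simp
          · rw [pow_succ, ih h, hJJ]
      apply le_antisymm
      · calc (⨅ (n : ℕ) (_ : 1 ≤ n), (resIdeal V k M) ^ n)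
            ≤ ⨅ (_ : 1 ≤ 1), (resIdeal V k M) ^ 1 := iInf_le _ 1
          _ ≤ (resIdeal V k M) ^ 1 := iInf_le _ le_rfl
          _ = resIdeal V k M := pow_one _
      · exact le_iInf fun n => le_iInf fun hn => (hJn n hn).ge
    · rw [Submodule.ne_bot_iff]
      refine ⟨⟨m, hMD m hmM⟩, (hres _).mpr hmM, ?_⟩
      intro h
      exact hm0 (congrArg Subtype.val h)
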